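/- (Fredholm's Alternative for periodic linear systems.) Let T > 0, let A : ℝ → M_n(ℝ) be a continuous T-periodic matrix-valued function, and let f : ℝ → ℝⁿ be continuous and T-periodic. Then the equation ẋ(t) = A(t)x(t) + f(t) has a T-periodic C¹ solution x : ℝ → ℝⁿ if and only if ∫₀ᵀ ⟨y(t), f(t)⟩ dt = 0 for every T-periodic C¹ solution y : ℝ → ℝⁿ of the adjoint equation ẏ(t) = −A(t)ᵀ y(t). -/

import Mathlib

open Set Function Metric MeasureTheory intervalIntegral Topology Filter NNReal Nat Matrix

set_option linter.unusedSectionVars false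

namespace FredholmAux

variable {E : Type*} [NormedAddCommGroup E] [NormedSpace ℝ E]

section Picard

variable (v : ℝ → E → E) (a b t₀ : ℝ) (hab : a ≤ b) (x₀ : E)

noncomputable def FF (u : C(Icc a b, E)) : ℝ → E :=
  fun s => v (projIcc a b hab s) (u (projIcc a b hab s))

lemma cont_FF (hv : Continuous fun p : ℝ × E => v p.1 p.2) (u : C(Icc a b, E)) :
    Continuous (FF v a b hab u) := by
  have h1 : Continuous fun s : ℝ => (projIcc a b hab s : ℝ) :=
    continuous_subtype_val.comp continuous_projIcc
  have h2 : Continuous fun s : ℝ => u (projIcc a b hab s) :=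
    u.continuous.comp continuous_projIcc
  exact hv.comp (h1.prodMk h2)

noncomputable def PN (hv : Continuous fun p : ℝ × E => v p.1 p.2)
    (u : C(Icc a b, E)) : C(Icc a b, E) :=
  ⟨fun t => x₀ + ∫ s in t₀..(t : ℝ), FF v a b hab u s, by
    refine continuous_const.add ?_
    exact (intervalIntegral.continuous_primitive
      (fun c d => (cont_FF v a b hab hv u).intervalIntegrable c d) t₀).comp
      continuous_subtype_val⟩

lemma PN_apply (hv : Continuous fun p : ℝ × E => v p.1 p.2) (u : C(Icc a b, E)) (t : Icc a b) :
    PN v a b t₀ hab x₀ hv u t = x₀ + ∫ s in t₀..(t : ℝ), FF v a b hab u s := rfl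

lemma dist_PN_le (K : ℝ≥0) (ht₀ : t₀ ∈ Icc a b)
    (hl : ∀ t ∈ Icc a b, LipschitzWith K (v t))
    (hv : Continuous fun p : ℝ × E => v p.1 p.2)
    {u₁ u₂ : C(Icc a b, E)} {m : ℕ} {d : ℝ}
    (h : ∀ t : Icc a b, dist (u₁ t) (u₂ t) ≤ (K * |t.1 - t₀|) ^ m / m ! * d)
    (t : Icc a b) :
    dist (PN v a b t₀ hab x₀ hv u₁ t) (PN v a b t₀ hab x₀ hv u₂ t)
      ≤ (K * |t.1 - t₀|) ^ (m + 1) / (m + 1)! * d := by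
  have key : ∀ τ : ℝ, τ ∈ Set.uIoc t₀ (t : ℝ) →
      ‖FF v a b hab u₁ τ - FF v a b hab u₂ τ‖
        ≤ K * ((K * |τ - t₀|) ^ m / m ! * d) := by
    intro τ hτ
    have hτ' : τ ∈ Icc a b := uIcc_subset_Icc ht₀ t.2 (Ioc_subset_Icc_self hτ)
    have hproj : (projIcc a b hab τ : ℝ) = τ := by rw [projIcc_of_mem hab hτ']
    have hlip := (hl (projIcc a b hab τ : ℝ) (projIcc a b hab τ).2).dist_le_mul
      (u₁ (projIcc a b hab τ)) (u₂ (projIcc a b hab τ))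
    rw [← dist_eq_norm]
    refine hlip.trans ?_
    have h2 := h (projIcc a b hab τ)
    rw [hproj] at h2
    exact mul_le_mul_of_nonneg_left h2 K.2
  simp only [dist_eq_norm, PN_apply, add_sub_add_left_eq_sub, ←
    intervalIntegral.integral_sub ((cont_FF v a b hab hv u₁).intervalIntegrable _ _)
      ((cont_FF v a b hab hv u₂).intervalIntegrable _ _),
    norm_integral_eq_norm_integral_uIoc]
  calc
    ‖∫ τ in Set.uIoc t₀ (t : ℝ), (FF v a b hab u₁ τ - FF v a b hab u₂ τ)‖ ≤
        ∫ τ in Set.uIoc t₀ (t : ℝ), K * ((K * |τ - t₀|) ^ m / m ! * d) := by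
      refine norm_integral_le_of_norm_le (Continuous.integrableOn_uIoc (by fun_prop)) ?_
      exact (ae_restrict_mem measurableSet_Ioc).mono fun τ hτ => key τ hτ
    _ = (K * |t.1 - t₀|) ^ (m + 1) / (m + 1)! * d := by
      simp_rw [mul_pow, div_eq_mul_inv, mul_assoc, MeasureTheory.integral_const_mul,
        MeasureTheory.integral_mul_const, integral_pow_abs_sub_uIoc, div_eq_mul_inv,
        pow_succ' (K : ℝ), Nat.factorial_succ, Nat.cast_mul, Nat.cast_succ, mul_inv, mul_assoc]

lemma dist_PN_iterate (K : ℝ≥0) (ht₀ : t₀ ∈ Icc a b)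
    (hl : ∀ t ∈ Icc a b, LipschitzWith K (v t))
    (hv : Continuous fun p : ℝ × E => v p.1 p.2)
    (u₁ u₂ : C(Icc a b, E)) (m : ℕ) (t : Icc a b) :
    dist ((PN v a b t₀ hab x₀ hv)^[m] u₁ t) ((PN v a b t₀ hab x₀ hv)^[m] u₂ t)
      ≤ (K * |t.1 - t₀|) ^ m / m ! * dist u₁ u₂ := by
  induction m generalizing t with
  | zero =>
    simpa using ContinuousMap.dist_apply_le_dist t
  | succ m ih =>
    rw [iterate_succ_apply', iterate_succ_apply']
    exact dist_PN_le v a b t₀ hab x₀ K ht₀ hl hv ih t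


theorem exists_sol_Icc [CompleteSpace E] (v : ℝ → E → E) (a b t₀ : ℝ) (hab : a ≤ b)
    (ht₀ : t₀ ∈ Icc a b) (x₀ : E) (K : ℝ≥0)
    (hl : ∀ t ∈ Icc a b, LipschitzWith K (v t))
    (hv : Continuous fun p : ℝ × E => v p.1 p.2) :
    ∃ x : ℝ → E, x t₀ = x₀ ∧ ∀ t ∈ Icc a b, HasDerivWithinAt x (v t (x t)) (Icc a b) t := by
  haveI : Nonempty (Icc a b) := (nonempty_Icc.2 hab).to_subtype
  set g := PN v a b t₀ hab x₀ hv with hg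
  set B : ℝ := (K : ℝ) * max (b - t₀) (t₀ - a) with hB
  have hB0 : 0 ≤ B := mul_nonneg K.2 (le_max_iff.2 (Or.inl (sub_nonneg.2 ht₀.2)))
  obtain ⟨m, hm⟩ := ((FloorSemiring.tendsto_pow_div_factorial_atTop B).eventually
    (gt_mem_nhds zero_lt_one)).exists
  have habs : ∀ t : Icc a b, |t.1 - t₀| ≤ max (b - t₀) (t₀ - a) := by
    intro t
    rw [abs_sub_le_iff]
    exact ⟨le_trans (by linarith [t.2.2] : t.1 - t₀ ≤ b - t₀) (le_max_left _ _),
      le_trans (by linarith [t.2.1] : t₀ - t.1 ≤ t₀ - a) (le_max_right _ _)⟩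
  have hd : ∀ u₁ u₂ : C(Icc a b, E),
      dist (g^[m] u₁) (g^[m] u₂) ≤ B ^ m / m ! * dist u₁ u₂ := by
    intro u₁ u₂
    refine ContinuousMap.dist_le_iff_of_nonempty.2 fun t => ?_
    refine (dist_PN_iterate v a b t₀ hab x₀ K ht₀ hl hv u₁ u₂ m t).trans ?_
    have h1 : ((K : ℝ) * |t.1 - t₀|) ^ m ≤ B ^ m := by
      apply pow_le_pow_left₀ (mul_nonneg K.2 (abs_nonneg _))
      exact mul_le_mul_of_nonneg_left (habs t) K.2
    have h2 : (0:ℝ) ≤ dist u₁ u₂ := dist_nonneg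
    gcongr
  have h0 : (0:ℝ) ≤ B ^ m / m ! := div_nonneg (pow_nonneg hB0 _) (Nat.cast_nonneg _)
  have hc : ContractingWith ⟨B ^ m / m !, h0⟩ (g^[m]) :=
    ⟨by exact_mod_cast hm, LipschitzWith.of_dist_le_mul hd⟩
  have hfix : Function.IsFixedPt g (ContractingWith.fixedPoint (g^[m]) hc) :=
    hc.isFixedPt_fixedPoint_iterate
  set u := ContractingWith.fixedPoint (g^[m]) hc with hu
  have hgu : g u = u := hfix
  refine ⟨fun s => u (projIcc a b hab s), ?_, ?_⟩
  · show u (projIcc a b hab t₀) = x₀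
    have h3 := congrArg (fun w : C(Icc a b, E) => w (projIcc a b hab t₀)) hgu
    simp only [hg, PN_apply] at h3
    rw [← h3]
    have h4 : (projIcc a b hab t₀ : ℝ) = t₀ := by rw [projIcc_of_mem hab ht₀]
    simp [PN_apply, h4]
  · intro t ht
    haveI : Fact (t ∈ Icc a b) := ⟨ht⟩
    have hprim : HasDerivWithinAt (fun s : ℝ => x₀ + ∫ τ in t₀..s, FF v a b hab u τ)
        (FF v a b hab u t) (Icc a b) t := by
      refine HasDerivWithinAt.const_add _ ?_
      exact intervalIntegral.integral_hasDerivWithinAt_right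
        ((cont_FF v a b hab hv u).intervalIntegrable _ _)
        ((cont_FF v a b hab hv u).stronglyMeasurableAtFilter _ _)
        (cont_FF v a b hab hv u).continuousWithinAt
    have hproj : (projIcc a b hab t : ℝ) = t := by rw [projIcc_of_mem hab ht]
    have hFF : FF v a b hab u t = v t (u (projIcc a b hab t)) := by
      simp only [FF, hproj]
    rw [hFF] at hprim
    refine hprim.congr (fun s hs => ?_) ?_
    · show u (projIcc a b hab s) = x₀ + ∫ τ in t₀..s, FF v a b hab u τ
      have h3 := congrArg (fun w : C(Icc a b, E) => w (projIcc a b hab s)) hgu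
      simp only [hg, PN_apply] at h3
      rw [← h3]
      have hps : (projIcc a b hab s : ℝ) = s := by rw [projIcc_of_mem hab hs]
      simp [PN_apply, hps]
    · show u (projIcc a b hab t) = x₀ + ∫ τ in t₀..t, FF v a b hab u τ
      have h3 := congrArg (fun w : C(Icc a b, E) => w (projIcc a b hab t)) hgu
      simp only [hg, PN_apply] at h3
      rw [← h3]
      simp [PN_apply, hproj]

end Picard


section Linear

variable {n : ℕ}

/-- `mulVecLin` as a continuous linear map, with continuity in the matrix. -/
noncomputable def LVmap : Matrix (Fin n) (Fin n) ℝ →ₗ[ℝ] ((Fin n → ℝ) →L[ℝ] (Fin n → ℝ)) :=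
  (LinearMap.toContinuousLinearMap : ((Fin n → ℝ) →ₗ[ℝ] (Fin n → ℝ)) ≃ₗ[ℝ] _).toLinearMap ∘ₗ
    (Matrix.toLin' : Matrix (Fin n) (Fin n) ℝ ≃ₗ[ℝ] _).toLinearMap

lemma LVmap_apply (M : Matrix (Fin n) (Fin n) ℝ) (x : Fin n → ℝ) :
    LVmap M x = M.mulVec x := by
  simp [LVmap, Matrix.toLin'_apply]

lemma cont_LVmap : Continuous (LVmap (n := n)) :=
  LVmap.continuous_of_finiteDimensional

lemma lin_lip (M : ℝ → Matrix (Fin n) (Fin n) ℝ) (hM : Continuous M)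
    (g : ℝ → Fin n → ℝ) (a b : ℝ) :
    ∃ K : ℝ≥0, ∀ t ∈ Icc a b, LipschitzWith K (fun x => M t *ᵥ x + g t) := by
  have hc : ContinuousOn (fun t => ‖LVmap (M t)‖) (Icc a b) :=
    (continuous_norm.comp (cont_LVmap.comp hM)).continuousOn
  obtain ⟨C, hC⟩ := isCompact_Icc.exists_bound_of_continuousOn hc
  refine ⟨C.toNNReal, fun t ht => LipschitzWith.of_dist_le_mul fun x y => ?_⟩
  have h1 : (M t *ᵥ x + g t) - (M t *ᵥ y + g t) = LVmap (M t) (x - y) := by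
    rw [LVmap_apply, Matrix.mulVec_sub]
    abel
  rw [dist_eq_norm, dist_eq_norm, h1]
  calc ‖LVmap (M t) (x - y)‖ ≤ ‖LVmap (M t)‖ * ‖x - y‖ := (LVmap (M t)).le_opNorm _
    _ ≤ (C.toNNReal : ℝ) * ‖x - y‖ := by
        apply mul_le_mul_of_nonneg_right _ (norm_nonneg _)
        calc ‖LVmap (M t)‖ ≤ |‖LVmap (M t)‖| := le_abs_self _
          _ ≤ C := hC t ht
          _ ≤ (C.toNNReal : ℝ) := Real.le_coe_toNNReal C

lemma cont_vlin (M : ℝ → Matrix (Fin n) (Fin n) ℝ) (hM : Continuous M)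
    (g : ℝ → Fin n → ℝ) (hg : Continuous g) :
    Continuous fun p : ℝ × (Fin n → ℝ) => M p.1 *ᵥ p.2 + g p.1 :=
  ((hM.comp continuous_fst).matrix_mulVec continuous_snd).add (hg.comp continuous_fst)

/-- Uniqueness of solutions of a linear ODE on an open interval. -/
lemma unique_on (M : ℝ → Matrix (Fin n) (Fin n) ℝ) (hM : Continuous M)
    (g : ℝ → Fin n → ℝ) (c d t₀ : ℝ) (ht₀ : t₀ ∈ Ioo c d)
    (x y : ℝ → Fin n → ℝ)
    (hx : ∀ t ∈ Ioo c d, HasDerivAt x (M t *ᵥ x t + g t) t)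
    (hy : ∀ t ∈ Ioo c d, HasDerivAt y (M t *ᵥ y t + g t) t)
    (h0 : x t₀ = y t₀) : EqOn x y (Ioo c d) := by
  classical
  obtain ⟨K, hK⟩ := lin_lip M hM g c d
  set s : ℝ → Set (Fin n → ℝ) := fun t => if t ∈ Icc c d then univ else ∅ with hs
  have hv : ∀ t, LipschitzOnWith K (fun z => M t *ᵥ z + g t) (s t) := by
    intro t
    by_cases ht : t ∈ Icc c d
    · rw [hs]; simp only [if_pos ht]
      exact (hK t ht).lipschitzOnWith
    · rw [hs]; simp only [if_neg ht]
      exact lipschitzOnWith_empty _ _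
  have hmem : ∀ (w : ℝ → Fin n → ℝ), ∀ t ∈ Ioo c d, w t ∈ s t := by
    intro w t ht
    rw [hs]; simp [Ioo_subset_Icc_self ht]
  exact ODE_solution_unique_of_mem_Ioo (fun t _ => hv t) ht₀
    (fun t ht => ⟨hx t ht, hmem x t ht⟩) (fun t ht => ⟨hy t ht, hmem y t ht⟩) h0

/-- Global existence for linear ODEs. -/
theorem exists_sol_global (M : ℝ → Matrix (Fin n) (Fin n) ℝ) (hM : Continuous M)
    (g : ℝ → Fin n → ℝ) (hg : Continuous g) (ξ : Fin n → ℝ) :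
    ∃ x : ℝ → Fin n → ℝ, x 0 = ξ ∧ ∀ t, HasDerivAt x (M t *ᵥ x t + g t) t := by
  have hex : ∀ N : ℕ, ∃ x : ℝ → Fin n → ℝ, x 0 = ξ ∧
      ∀ t ∈ Ioo (-((N:ℝ)+1)) ((N:ℝ)+1), HasDerivAt x (M t *ᵥ x t + g t) t := by
    intro N
    have hab : (-((N:ℝ)+1)) ≤ ((N:ℝ)+1) := by
      have : (0:ℝ) ≤ (N:ℝ)+1 := by positivity
      linarith
    have ht₀ : (0:ℝ) ∈ Icc (-((N:ℝ)+1)) ((N:ℝ)+1) := by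
      constructor <;> [linarith [Nat.cast_nonneg (α := ℝ) N]; linarith [Nat.cast_nonneg (α := ℝ) N]]
    obtain ⟨K, hK⟩ := lin_lip M hM g (-((N:ℝ)+1)) ((N:ℝ)+1)
    obtain ⟨x, hx0, hxd⟩ := exists_sol_Icc (fun t z => M t *ᵥ z + g t)
      (-((N:ℝ)+1)) ((N:ℝ)+1) 0 hab ht₀ ξ K hK (cont_vlin M hM g hg)
    refine ⟨x, hx0, fun t ht => ?_⟩
    exact (hxd t (Ioo_subset_Icc_self ht)).hasDerivAt (Icc_mem_nhds ht.1 ht.2)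
  choose X hX0 hXd using hex
  have hagree : ∀ (N₁ N₂ : ℕ) (t : ℝ), |t| < (N₁:ℝ)+1 → |t| < (N₂:ℝ)+1 →
      X N₁ t = X N₂ t := by
    have key : ∀ (N₁ N₂ : ℕ), N₁ ≤ N₂ → ∀ t : ℝ, |t| < (N₁:ℝ)+1 →
        X N₁ t = X N₂ t := by
      intro N₁ N₂ hle t ht
      have hsub : Ioo (-((N₁:ℝ)+1)) ((N₁:ℝ)+1) ⊆ Ioo (-((N₂:ℝ)+1)) ((N₂:ℝ)+1) := by
        apply Ioo_subset_Ioo <;> [skip; skip] <;>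
          · have : ((N₁:ℝ)) ≤ (N₂:ℝ) := by exact_mod_cast hle
            linarith
      have h0mem : (0:ℝ) ∈ Ioo (-((N₁:ℝ)+1)) ((N₁:ℝ)+1) := by
        constructor <;> [linarith [Nat.cast_nonneg (α := ℝ) N₁];
          linarith [Nat.cast_nonneg (α := ℝ) N₁]]
      exact unique_on M hM g _ _ 0 h0mem (X N₁) (X N₂) (fun s hs => hXd N₁ s hs)
        (fun s hs => hXd N₂ s (hsub hs)) ((hX0 N₁).trans (hX0 N₂).symm)
        (abs_lt.mp ht |> fun h => ⟨h.1, h.2⟩)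
    intro N₁ N₂ t h1 h2
    rcases le_total N₁ N₂ with h | h
    · exact key N₁ N₂ h t h1
    · exact (key N₂ N₁ h t h2).symm
  refine ⟨fun t => X ⌊|t|⌋₊ t, ?_, ?_⟩
  · simpa using hX0 ⌊|(0:ℝ)|⌋₊
  · intro t
    set N := ⌊|t|⌋₊ with hN
    have htN : |t| < (N:ℝ)+1 := Nat.lt_floor_add_one _
    have hopen : IsOpen {s : ℝ | |s| < (N:ℝ)+1} := by
      have : {s : ℝ | |s| < (N:ℝ)+1} = abs ⁻¹' (Iio ((N:ℝ)+1)) := rfl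
      rw [this]
      exact isOpen_Iio.preimage continuous_abs
    have hnhds : {s : ℝ | |s| < (N:ℝ)+1} ∈ 𝓝 t := hopen.mem_nhds htN
    have heq : (fun s => X ⌊|s|⌋₊ s) =ᶠ[𝓝 t] X N := by
      filter_upwards [hnhds] with s hs
      exact hagree ⌊|s|⌋₊ N s (Nat.lt_floor_add_one _) hs
    have hXt : X N t = (fun s => X ⌊|s|⌋₊ s) t := rfl
    have hd := hXd N t ⟨by cases abs_lt.mp htN; linarith, (abs_lt.mp htN).2⟩
    have := hd.congr_of_eventuallyEq heq
    simpa [← hXt] using this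

/-- Global uniqueness for linear ODEs. -/
theorem sol_unique_global (M : ℝ → Matrix (Fin n) (Fin n) ℝ) (hM : Continuous M)
    (g : ℝ → Fin n → ℝ) (x y : ℝ → Fin n → ℝ)
    (hx : ∀ t, HasDerivAt x (M t *ᵥ x t + g t) t)
    (hy : ∀ t, HasDerivAt y (M t *ᵥ y t + g t) t)
    (h0 : x 0 = y 0) : x = y := by
  funext t
  set N := ⌊|t|⌋₊ with hN
  have htN : |t| < (N:ℝ)+1 := Nat.lt_floor_add_one _
  have h0mem : (0:ℝ) ∈ Ioo (-((N:ℝ)+1)) ((N:ℝ)+1) := by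
    constructor <;> [linarith [Nat.cast_nonneg (α := ℝ) N];
      linarith [Nat.cast_nonneg (α := ℝ) N]]
  exact unique_on M hM g _ _ 0 h0mem x y (fun s _ => hx s) (fun s _ => hy s) h0
    ⟨(abs_lt.mp htN).1, (abs_lt.mp htN).2⟩

end Linear


section Helpers

variable {n : ℕ}

lemma hasDerivAt_dot {x y : ℝ → Fin n → ℝ} {x' y' : Fin n → ℝ} {t : ℝ}
    (hy : HasDerivAt y y' t) (hx : HasDerivAt x x' t) :
    HasDerivAt (fun s => y s ⬝ᵥ x s) (y' ⬝ᵥ x t + y t ⬝ᵥ x') t := by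
  have h : ∀ i : Fin n, HasDerivAt (fun s => y s i * x s i)
      (y' i * x t i + y t i * x' i) t :=
    fun i => (hasDerivAt_pi.mp hy i).mul (hasDerivAt_pi.mp hx i)
  have h2 := HasDerivAt.fun_sum (fun i (_ : i ∈ Finset.univ) => h i)
  simpa [dotProduct, Finset.sum_add_distrib] using h2

lemma pairing_cancel (Amat : Matrix (Fin n) (Fin n) ℝ) (yv xv gv : Fin n → ℝ) :
    (-(Amatᵀ *ᵥ yv)) ⬝ᵥ xv + yv ⬝ᵥ (Amat *ᵥ xv + gv) = yv ⬝ᵥ gv := by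
  rw [neg_dotProduct, mulVec_transpose, dotProduct_add, dotProduct_mulVec]
  abel

lemma integral_pair (T : ℝ) (M : ℝ → Matrix (Fin n) (Fin n) ℝ)
    (g x y : ℝ → Fin n → ℝ) (hg : Continuous g)
    (hx : ∀ t, HasDerivAt x (M t *ᵥ x t + g t) t)
    (hy : ∀ t, HasDerivAt y (-((M t)ᵀ *ᵥ y t)) t) :
    ∫ t in (0:ℝ)..T, y t ⬝ᵥ g t = y T ⬝ᵥ x T - y 0 ⬝ᵥ x 0 := by
  have hcy : Continuous y :=
    continuous_iff_continuousAt.mpr fun t => (hy t).differentiableAt.continuousAt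
  have hu : ∀ t, HasDerivAt (fun s => y s ⬝ᵥ x s) (y t ⬝ᵥ g t) t := by
    intro t
    have h2 := hasDerivAt_dot (hy t) (hx t)
    rwa [pairing_cancel] at h2
  exact intervalIntegral.integral_eq_sub_of_hasDerivAt (fun t _ => hu t)
    ((hcy.dotProduct hg).intervalIntegrable 0 T)

lemma euclid_inner (a c : EuclideanSpace ℝ (Fin n)) :
    (inner ℝ a c : ℝ) = (WithLp.equiv 2 (Fin n → ℝ) a) ⬝ᵥ (WithLp.equiv 2 (Fin n → ℝ) c) := by
  simp [PiLp.inner_apply, dotProduct, RCLike.inner_apply, WithLp.equiv, Equiv.refl_apply]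
  exact Finset.sum_congr rfl fun _ _ => mul_comm _ _

lemma matrix_fredholm (M : Matrix (Fin n) (Fin n) ℝ) (b : Fin n → ℝ)
    (h : ∀ η, Mᵀ *ᵥ η = 0 → η ⬝ᵥ b = 0) : ∃ ξ, M *ᵥ ξ = b := by
  classical
  set e := WithLp.linearEquiv 2 ℝ (Fin n → ℝ) with he
  set L : EuclideanSpace ℝ (Fin n) →ₗ[ℝ] EuclideanSpace ℝ (Fin n) :=
    e.symm.toLinearMap ∘ₗ M.mulVecLin ∘ₗ e.toLinearMap with hL
  have hLval : ∀ u : EuclideanSpace ℝ (Fin n), e (L u) = M *ᵥ (e u) := by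
    intro u; simp [hL, Matrix.mulVecLin_apply]
  set S := LinearMap.range L with hS
  have hinner : ∀ a c : EuclideanSpace ℝ (Fin n), (inner ℝ a c : ℝ) = (e a) ⬝ᵥ (e c) :=
    fun a c => euclid_inner a c
  have hb : e.symm b ∈ Sᗮᗮ := by
    rw [Submodule.mem_orthogonal]
    intro u hu
    rw [Submodule.mem_orthogonal] at hu
    have hMTu : Mᵀ *ᵥ (e u) = 0 := by
      have h1 : (L (e.symm (Mᵀ *ᵥ (e u)))) ∈ S := LinearMap.mem_range_self _ _
      have h2 := hu _ h1
      rw [hinner] at h2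
      have h3 : e (L (e.symm (Mᵀ *ᵥ (e u)))) = M *ᵥ (Mᵀ *ᵥ (e u)) := by
        rw [hLval]; simp
      rw [h3] at h2
      have h4 : (M *ᵥ (Mᵀ *ᵥ e u)) ⬝ᵥ (e u) = (Mᵀ *ᵥ e u) ⬝ᵥ (Mᵀ *ᵥ e u) := by
        rw [dotProduct_comm, dotProduct_mulVec, ← mulVec_transpose]
      rw [h4] at h2
      exact dotProduct_self_eq_zero.mp h2
    rw [hinner]
    have h6 : e (e.symm b) = b := by simp
    rw [h6]
    exact h (e u) hMTu
  rw [Submodule.orthogonal_orthogonal] at hb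
  obtain ⟨u, hu⟩ := hb
  refine ⟨e u, ?_⟩
  have := hLval u
  rw [hu] at this
  simpa [he] using this.symm

lemma shift_deriv {g : ℝ → Fin n → ℝ} {v : Fin n → ℝ} {t T : ℝ}
    (h : HasDerivAt g v (t + T)) : HasDerivAt (fun s => g (s + T)) v t :=
  HasDerivAt.comp_add_const t T h

end Helpers

end FredholmAux

/-- **Fredholm's alternative for periodic linear systems.**
For continuous `T`-periodic `A : ℝ → Mₙ(ℝ)` and `f : ℝ → ℝⁿ`, the equation
`ẋ = A(t)x + f(t)` has a `T`-periodic `C¹` solution if and only if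
`∫₀ᵀ ⟨y(t), f(t)⟩ dt = 0` for every `T`-periodic `C¹` solution `y` of the adjoint
equation `ẏ = -A(t)ᵀ y`. -/
theorem fredholm_alternative_periodic
    (n : ℕ) (T : ℝ) (hT : 0 < T)
    (A : ℝ → Matrix (Fin n) (Fin n) ℝ)
    (hA : Continuous A) (hAper : ∀ t, A (t + T) = A t)
    (f : ℝ → Fin n → ℝ)
    (hf : Continuous f) (hfper : ∀ t, f (t + T) = f t) :
    (∃ x : ℝ → Fin n → ℝ, ContDiff ℝ 1 x ∧ (∀ t, x (t + T) = x t) ∧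
        ∀ t, deriv x t = (A t).mulVec (x t) + f t) ↔
      (∀ y : ℝ → Fin n → ℝ, ContDiff ℝ 1 y → (∀ t, y (t + T) = y t) →
        (∀ t, deriv y t = -((A t)ᵀ.mulVec (y t))) →
        ∫ t in (0 : ℝ)..T, y t ⬝ᵥ f t = 0) := by
  classical
  constructor
  · rintro ⟨x, hx1, hxper, hxde⟩ y hy1 hyper hyde
    have hx' : ∀ t, HasDerivAt x (A t *ᵥ x t + f t) t := by
      intro t
      have h := ((hx1.differentiable one_ne_zero) t).hasDerivAt
      rwa [hxde t] at h
    have hy' : ∀ t, HasDerivAt y (-((A t)ᵀ *ᵥ y t)) t := by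
      intro t
      have h := ((hy1.differentiable one_ne_zero) t).hasDerivAt
      rwa [hyde t] at h
    have key := FredholmAux.integral_pair T A f x y hf hx' hy'
    have hxT : x T = x 0 := by simpa using hxper 0
    have hyT : y T = y 0 := by simpa using hyper 0
    rw [key, hxT, hyT, sub_self]
  · intro H
    -- solution families
    choose hom hom0 homd using fun ξ : Fin n → ℝ =>
      FredholmAux.exists_sol_global A hA (fun _ => (0 : Fin n → ℝ)) continuous_const ξ
    have homd' : ∀ ξ t, HasDerivAt (hom ξ) (A t *ᵥ hom ξ t) t := by
      intro ξ t; simpa using homd ξ t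
    set B : ℝ → Matrix (Fin n) (Fin n) ℝ := fun t => -(A t)ᵀ with hB
    have hBc : Continuous B := hA.matrix_transpose.neg
    choose adj adj0 adjd using fun η : Fin n → ℝ =>
      FredholmAux.exists_sol_global B hBc (fun _ => (0 : Fin n → ℝ)) continuous_const η
    have adjd' : ∀ η t, HasDerivAt (adj η) (-((A t)ᵀ *ᵥ adj η t)) t := by
      intro η t; have h := adjd η t
      simpa [hB, Matrix.neg_mulVec] using h
    obtain ⟨z, hz0, hzd⟩ := FredholmAux.exists_sol_global A hA f hf 0
    set b := z T with hb
    -- uniqueness shortcuts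
    have huniq : ∀ x y : ℝ → Fin n → ℝ,
        (∀ t, HasDerivAt x (A t *ᵥ x t) t) → (∀ t, HasDerivAt y (A t *ᵥ y t) t) →
        x 0 = y 0 → x = y := by
      intro x y hx hy h0
      exact FredholmAux.sol_unique_global A hA (fun _ => (0 : Fin n → ℝ)) x y
        (fun t => by simpa using hx t) (fun t => by simpa using hy t) h0
    have huniqB : ∀ x y : ℝ → Fin n → ℝ,
        (∀ t, HasDerivAt x (-((A t)ᵀ *ᵥ x t)) t) →
        (∀ t, HasDerivAt y (-((A t)ᵀ *ᵥ y t)) t) →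
        x 0 = y 0 → x = y := by
      intro x y hx hy h0
      exact FredholmAux.sol_unique_global B hBc (fun _ => (0 : Fin n → ℝ)) x y
        (fun t => by simpa [hB, Matrix.neg_mulVec] using hx t)
        (fun t => by simpa [hB, Matrix.neg_mulVec] using hy t) h0
    have huniqF : ∀ x y : ℝ → Fin n → ℝ,
        (∀ t, HasDerivAt x (A t *ᵥ x t + f t) t) →
        (∀ t, HasDerivAt y (A t *ᵥ y t + f t) t) →
        x 0 = y 0 → x = y := fun x y hx hy h0 =>
      FredholmAux.sol_unique_global A hA f x y hx hy h0
    -- linearity of monodromy maps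
    have hadd : ∀ ξ η, hom (ξ + η) = fun t => hom ξ t + hom η t := by
      intro ξ η
      apply huniq _ _ (homd' _)
      · intro t
        have h := (homd' ξ t).add (homd' η t)
        rw [Matrix.mulVec_add]; exact h
      · simp [hom0]
    have hsmul : ∀ (c : ℝ) ξ, hom (c • ξ) = fun t => c • hom ξ t := by
      intro c ξ
      apply huniq _ _ (homd' _)
      · intro t
        have h := (homd' ξ t).const_smul c
        rw [Matrix.mulVec_smul]; exact h
      · simp [hom0]
    have haddB : ∀ ξ η, adj (ξ + η) = fun t => adj ξ t + adj η t := by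
      intro ξ η
      apply huniqB _ _ (adjd' _)
      · intro t
        have h := (adjd' ξ t).add (adjd' η t)
        have heq : -((A t)ᵀ *ᵥ adj ξ t) + -((A t)ᵀ *ᵥ adj η t)
            = -((A t)ᵀ *ᵥ (adj ξ t + adj η t)) := by
          rw [Matrix.mulVec_add]; abel
        rwa [heq] at h
      · simp [adj0]
    have hsmulB : ∀ (c : ℝ) ξ, adj (c • ξ) = fun t => c • adj ξ t := by
      intro c ξ
      apply huniqB _ _ (adjd' _)
      · intro t
        have h := (adjd' ξ t).const_smul c
        have heq : c • -((A t)ᵀ *ᵥ adj ξ t) = -((A t)ᵀ *ᵥ (c • adj ξ t)) := by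
          rw [Matrix.mulVec_smul]; rw [smul_neg]
        rwa [heq] at h
      · simp [adj0]
    set homT : (Fin n → ℝ) →ₗ[ℝ] (Fin n → ℝ) :=
      { toFun := fun ξ => hom ξ T
        map_add' := fun ξ η => by
          show hom (ξ + η) T = hom ξ T + hom η T
          rw [hadd]
        map_smul' := fun c ξ => by
          show hom (c • ξ) T = c • hom ξ T
          rw [hsmul] } with hhomT
    set adjT : (Fin n → ℝ) →ₗ[ℝ] (Fin n → ℝ) :=
      { toFun := fun η => adj η T
        map_add' := fun ξ η => by
          show adj (ξ + η) T = adj ξ T + adj η T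
          rw [haddB]
        map_smul' := fun c ξ => by
          show adj (c • ξ) T = c • adj ξ T
          rw [hsmulB] } with hadjT
    set U := LinearMap.toMatrix' homT with hUdef
    set V := LinearMap.toMatrix' adjT with hVdef
    have hU : ∀ ξ, U *ᵥ ξ = hom ξ T := by
      intro ξ
      have h1 : Matrix.toLin' U = homT := Matrix.toLin'_toMatrix' homT
      calc U *ᵥ ξ = Matrix.toLin' U ξ := (Matrix.toLin'_apply _ _).symm
        _ = hom ξ T := by rw [h1]; rfl
    have hV : ∀ η, V *ᵥ η = adj η T := by
      intro η
      have h1 : Matrix.toLin' V = adjT := Matrix.toLin'_toMatrix' adjT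
      calc V *ᵥ η = Matrix.toLin' V η := (Matrix.toLin'_apply _ _).symm
        _ = adj η T := by rw [h1]; rfl
    -- pairing invariance : adj η T ⬝ᵥ hom ξ T = η ⬝ᵥ ξ
    have hpair : ∀ η ξ, adj η T ⬝ᵥ hom ξ T = η ⬝ᵥ ξ := by
      intro η ξ
      have key := FredholmAux.integral_pair T A (fun _ => (0 : Fin n → ℝ)) (hom ξ) (adj η)
        continuous_const (fun t => by simpa using homd' ξ t) (adjd' η)
      simp only [dotProduct_zero, intervalIntegral.integral_zero, hom0, adj0] at key
      linarith [key]
    have hUTV : ∀ η, Uᵀ *ᵥ (V *ᵥ η) = η := by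
      intro η
      have hkey : ∀ ξ, (Uᵀ *ᵥ (V *ᵥ η) - η) ⬝ᵥ ξ = 0 := by
        intro ξ
        have h1 := hpair η ξ
        rw [← hU, ← hV] at h1
        have h2 : (V *ᵥ η) ⬝ᵥ (U *ᵥ ξ) = (Uᵀ *ᵥ (V *ᵥ η)) ⬝ᵥ ξ := by
          rw [dotProduct_mulVec, ← mulVec_transpose]
        rw [h2] at h1
        rw [sub_dotProduct, h1, sub_self]
      have h3 := hkey (Uᵀ *ᵥ (V *ᵥ η) - η)
      exact sub_eq_zero.mp (dotProduct_self_eq_zero.mp h3)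
    have hUV : Uᵀ * V = 1 := by
      apply Matrix.toLin'.injective
      apply LinearMap.ext
      intro η
      rw [Matrix.toLin'_apply, Matrix.toLin'_apply, ← Matrix.mulVec_mulVec, hUTV,
        Matrix.one_mulVec]
    have hVU : V * Uᵀ = 1 := mul_eq_one_comm.mp hUV
    have hVfix : ∀ η, Uᵀ *ᵥ η = η → V *ᵥ η = η := by
      intro η hη
      calc V *ᵥ η = V *ᵥ (Uᵀ *ᵥ η) := by rw [hη]
        _ = (V * Uᵀ) *ᵥ η := by rw [Matrix.mulVec_mulVec]
        _ = η := by rw [hVU, Matrix.one_mulVec]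
    -- orthogonality in matrix form
    have horth : ∀ η, (1 - U)ᵀ *ᵥ η = 0 → η ⬝ᵥ b = 0 := by
      intro η hη
      have hfix : Uᵀ *ᵥ η = η := by
        rw [Matrix.transpose_sub, Matrix.transpose_one, Matrix.sub_mulVec,
          Matrix.one_mulVec] at hη
        have h4 := sub_eq_zero.mp hη
        exact h4.symm
      have hVfixη := hVfix η hfix
      set y := adj η with hy
      have hyT : y T = η := by rw [hV] at hVfixη; exact hVfixη
      have hy0 : y 0 = η := adj0 η
      have hyd : ∀ t, HasDerivAt y (-((A t)ᵀ *ᵥ y t)) t := adjd' η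
      have hyper : ∀ t, y (t + T) = y t := by
        have hshift : ∀ t, HasDerivAt (fun s => y (s + T))
            (-((A t)ᵀ *ᵥ (fun s => y (s + T)) t)) t := by
          intro t
          have h5 := FredholmAux.shift_deriv (hyd (t + T))
          simpa [hAper t] using h5
        have h6 : (fun s => y (s + T)) = y := by
          apply huniqB _ _ hshift hyd
          simp [hyT, hy0]
        exact fun t => congrFun h6 t
      have hycont : Continuous y :=
        continuous_iff_continuousAt.mpr fun t => (hyd t).differentiableAt.continuousAt
      have hyC1 : ContDiff ℝ 1 y := by
        rw [contDiff_one_iff_deriv]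
        refine ⟨fun t => (hyd t).differentiableAt, ?_⟩
        have h7 : deriv y = fun t => -((A t)ᵀ *ᵥ y t) := funext fun t => (hyd t).deriv
        rw [h7]
        exact (hA.matrix_transpose.matrix_mulVec hycont).neg
      have hint := H y hyC1 hyper (fun t => (hyd t).deriv)
      have key := FredholmAux.integral_pair T A f z y hf hzd hyd
      rw [hint, hyT, hy0, hz0] at key
      have h8 : η ⬝ᵥ (0 : Fin n → ℝ) = 0 := dotProduct_zero η
      rw [h8] at key
      rw [← hb] at key
      linarith [key]
    obtain ⟨ξ, hξ⟩ := FredholmAux.matrix_fredholm (1 - U) b horth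
    have hξ' : ξ - U *ᵥ ξ = b := by
      rwa [Matrix.sub_mulVec, Matrix.one_mulVec] at hξ
    -- construct periodic solution
    set x : ℝ → Fin n → ℝ := fun t => hom ξ t + z t with hx
    have hxd : ∀ t, HasDerivAt x (A t *ᵥ x t + f t) t := by
      intro t
      have h9 := (homd' ξ t).add (hzd t)
      have heq : A t *ᵥ hom ξ t + (A t *ᵥ z t + f t) = A t *ᵥ (hom ξ t + z t) + f t := by
        rw [Matrix.mulVec_add]; abel
      rw [heq] at h9
      exact h9
    have hx0 : x 0 = ξ := by
      simp only [hx, hom0, hz0, add_zero]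
    have hxT : x T = ξ := by
      have h10 : x T = hom ξ T + z T := rfl
      rw [h10, ← hU, ← hb, ← hξ']
      abel
    have hxper : ∀ t, x (t + T) = x t := by
      have hshift : ∀ t, HasDerivAt (fun s => x (s + T))
          (A t *ᵥ (fun s => x (s + T)) t + f t) t := by
        intro t
        have h11 := FredholmAux.shift_deriv (hxd (t + T))
        simpa [hAper t, hfper t] using h11
      have h12 : (fun s => x (s + T)) = x := by
        apply huniqF _ _ hshift hxd
        simp [hxT, hx0]
      exact fun t => congrFun h12 t
    have hxcont : Continuous x :=
      continuous_iff_continuousAt.mpr fun t => (hxd t).differentiableAt.continuousAt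
    have hxC1 : ContDiff ℝ 1 x := by
      rw [contDiff_one_iff_deriv]
      refine ⟨fun t => (hxd t).differentiableAt, ?_⟩
      have h13 : deriv x = fun t => A t *ᵥ x t + f t := funext fun t => (hxd t).deriv
      rw [h13]
      exact (hA.matrix_mulVec hxcont).add hf
    exact ⟨x, hxC1, hxper, fun t => (hxd t).deriv⟩
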